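/- arXiv:1703.00640 — 2 statements merged into one kernel-verified Lean document; each statement's English description precedes it below -/
import Mathlib

section
/- Let F be a real polynomial of degree less than N with coefficients F_0, …, F_{N−1}, and for r ≥ 0 let α*_r F denote the remainder on dividing ∑_{k=0}^{N−1} α_{r,k}·F_k·X^{k+r} by X^N − 1. Then for every integer λ ≥ 0 and every index 0 ≤ i < N: the series ∑_{r=0}^∞ (coefficient of X^i in α*_r F) converges absolutely; the tail satisfies |∑_{r=λ}^∞ (coefficient of X^i in α*_r F)| ≤ (4/3)·2^{−λ(b−2)}·max_{0≤k<N}|F_k|; and |∑_{r=0}^{λ−1} (coefficient of X^i in α*_r F)| ≤ (4/3)·max_{0≤k<N}|F_k|. -/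
open Polynomial

/-- Generalized binomial coefficient `C(x, r) = x (x-1) ⋯ (x-r+1) / r!`. -/
noncomputable def gbc (x : ℝ) (r : ℕ) : ℝ :=
  (∏ j ∈ Finset.range r, (x - j)) / (r.factorial : ℝ)

/-- `α_{0,k} = 1` and `α_{r,k} = (k/(rN)) C((k+r)/N - 1, r-1) (-2^(-b))^r` for `r ≥ 1`. -/
noncomputable def alphaC (b N r k : ℕ) : ℝ :=
  if r = 0 then 1
  else ((k : ℝ) / (r * N)) * gbc (((k : ℝ) + r) / N - 1) (r - 1) * (-(2:ℝ) ^ (-(b:ℤ))) ^ r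

/-- `α*_r F`: the remainder of `∑_{k<N} α_{r,k} F_k X^(k+r)` modulo `X^N - 1`. -/
noncomputable def astar (b N r : ℕ) (F : Polynomial ℝ) : Polynomial ℝ :=
  (∑ k ∈ Finset.range N, C (alphaC b N r k * F.coeff k) * X ^ (k + r)) %ₘ (X ^ N - 1)

/-- `m^m ≤ 4^m m!`. -/
lemma pow_self_le_four_pow_mul_factorial (m : ℕ) : m ^ m ≤ 4 ^ m * m.factorial := by
  have h1 : m.factorial * (m ^ m) ≤ m.factorial * ((m + 1) ^ m) :=
    Nat.mul_le_mul_left _ (Nat.pow_le_pow_left (Nat.le_succ m) m)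
  have h2 : m.factorial * (m + 1) ^ m ≤ (m + m).factorial :=
    Nat.factorial_mul_pow_le_factorial
  have h3 : (m + m).factorial = (m + m).choose m * m.factorial * m.factorial := by
    have := Nat.choose_mul_factorial_mul_factorial (Nat.le_add_right m m)
    simpa using this.symm
  have h4 : (m + m).choose m ≤ 4 ^ m := by
    calc (m + m).choose m ≤ (2 * m + 1).choose m :=
          Nat.choose_mono m (by omega)
      _ ≤ 4 ^ m := Nat.choose_middle_le_pow m
  have h5 : m.factorial * (m ^ m) ≤ m.factorial * (4 ^ m * m.factorial) := by
    calc m.factorial * (m ^ m) ≤ (m + m).factorial := h1.trans h2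
      _ = (m + m).choose m * m.factorial * m.factorial := h3
      _ ≤ 4 ^ m * m.factorial * m.factorial := by
          exact Nat.mul_le_mul_right _ (Nat.mul_le_mul_right _ h4)
      _ = m.factorial * (4 ^ m * m.factorial) := by ring
  exact Nat.le_of_mul_le_mul_left h5 m.factorial_pos

/-- Bound on the generalized binomial coefficient for arguments in `(-1, r]`. -/
lemma abs_gbc_le (x : ℝ) (r : ℕ) (hx1 : -1 < x) (hx2 : x ≤ r) :
    |gbc x r| ≤ 4 ^ r := by
  have hr0 : (0:ℝ) < r.factorial := by positivity
  have hprod : |∏ j ∈ Finset.range r, (x - j)| ≤ (r : ℝ) ^ r := by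
    rw [Finset.abs_prod]
    calc ∏ j ∈ Finset.range r, |x - (j:ℝ)|
        ≤ ∏ j ∈ Finset.range r, (r : ℝ) := by
          apply Finset.prod_le_prod (fun j _ => abs_nonneg _)
          intro j hj
          rw [Finset.mem_range] at hj
          rw [abs_le]
          constructor
          · have : (j : ℝ) ≤ r - 1 := by
              have : (j:ℝ) + 1 ≤ r := by exact_mod_cast hj
              linarith
            linarith
          · have : (0:ℝ) ≤ j := Nat.cast_nonneg j
            linarith
      _ = (r:ℝ) ^ r := by rw [Finset.prod_const, Finset.card_range]
  have hkey : (r : ℝ) ^ r ≤ 4 ^ r * r.factorial := by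
    have := pow_self_le_four_pow_mul_factorial r
    calc (r:ℝ) ^ r = ((r ^ r : ℕ) : ℝ) := by push_cast; ring
      _ ≤ ((4 ^ r * r.factorial : ℕ) : ℝ) := by exact_mod_cast this
      _ = 4 ^ r * r.factorial := by push_cast; ring
  rw [gbc, abs_div, abs_of_pos hr0, div_le_iff₀ hr0]
  calc |∏ j ∈ Finset.range r, (x - j)| ≤ (r:ℝ) ^ r := hprod
    _ ≤ 4 ^ r * r.factorial := hkey

/-- Bound on the coefficients `α_{r,k}`. -/
lemma abs_alphaC_le (b N r k : ℕ) (hb : 4 ≤ b) (hN : 3 ≤ N) (hk : k < N) :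
    |alphaC b N r k| ≤ ((2:ℝ) ^ (-((b:ℤ) - 2))) ^ r := by
  rcases Nat.eq_zero_or_pos r with hr | hr
  · subst hr; simp [alphaC]
  have hrne : r ≠ 0 := hr.ne'
  rw [alphaC, if_neg hrne]
  have hN0 : (0:ℝ) < N := by positivity
  have hr0 : (0:ℝ) < r := by exact_mod_cast hr
  -- bound the first factor by 1
  have h1 : |(k : ℝ) / (r * N)| ≤ 1 := by
    rw [abs_div, abs_of_nonneg (by positivity : (0:ℝ) ≤ (k:ℝ)),
      abs_of_pos (by positivity : (0:ℝ) < (r:ℝ) * N), div_le_one (by positivity)]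
    have hk' : (k : ℝ) ≤ N := by exact_mod_cast hk.le
    have : (1:ℝ) ≤ r := by exact_mod_cast hr
    nlinarith
  -- bound the gbc factor
  have hx1 : -1 < ((k : ℝ) + r) / N - 1 := by
    have : (0:ℝ) < ((k:ℝ) + r) / N := by positivity
    linarith
  have hx2 : ((k : ℝ) + r) / N - 1 ≤ ((r - 1 : ℕ) : ℝ) := by
    have hkN : (k : ℝ) ≤ N - 1 := by
      have : (k : ℝ) + 1 ≤ N := by exact_mod_cast hk
      linarith
    have hcast : ((r - 1 : ℕ) : ℝ) = (r : ℝ) - 1 := by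
      have : 1 ≤ r := hr
      push_cast [this]; ring
    rw [hcast, sub_le_sub_iff_right, div_le_iff₀ hN0]
    have hN3 : (3:ℝ) ≤ N := by exact_mod_cast hN
    have h1r : (1:ℝ) ≤ r := by exact_mod_cast hr
    nlinarith
  have h2 : |gbc (((k : ℝ) + r) / N - 1) (r - 1)| ≤ 4 ^ (r - 1) :=
    abs_gbc_le _ _ hx1 hx2
  -- bound the last factor
  have h3 : |(-(2:ℝ) ^ (-(b:ℤ))) ^ r| = ((2:ℝ) ^ (-(b:ℤ))) ^ r := by
    rw [abs_pow, abs_neg, abs_of_pos (by positivity : (0:ℝ) < (2:ℝ) ^ (-(b:ℤ)))]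
  have hnn : (0:ℝ) ≤ (2:ℝ) ^ (-(b:ℤ)) := by positivity
  calc |(k : ℝ) / (r * N) * gbc (((k : ℝ) + r) / N - 1) (r - 1) * (-(2:ℝ) ^ (-(b:ℤ))) ^ r|
      = |(k : ℝ) / (r * N)| * |gbc (((k : ℝ) + r) / N - 1) (r - 1)| *
        |(-(2:ℝ) ^ (-(b:ℤ))) ^ r| := by rw [abs_mul, abs_mul]
    _ ≤ 1 * 4 ^ (r - 1) * ((2:ℝ) ^ (-(b:ℤ))) ^ r := by
        rw [h3]
        apply mul_le_mul_of_nonneg_right _ (by positivity)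
        exact mul_le_mul h1 h2 (abs_nonneg _) zero_le_one
    _ ≤ 4 ^ r * ((2:ℝ) ^ (-(b:ℤ))) ^ r := by
        apply mul_le_mul_of_nonneg_right _ (by positivity)
        rw [one_mul]
        exact pow_le_pow_right₀ (by norm_num) (Nat.sub_le r 1)
    _ = ((2:ℝ) ^ (-((b:ℤ) - 2))) ^ r := by
        rw [← mul_pow]
        congr 1
        have : ((2:ℝ)) ^ (-((b:ℤ) - 2)) = (2:ℝ) ^ (2 + -(b:ℤ)) := by ring_nf
        rw [this, zpow_add₀ (by norm_num : (2:ℝ) ≠ 0)]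
        norm_num

/-- The remainder mod `X^N - 1` just reduces exponents mod `N`. -/
lemma astar_eq (b N r : ℕ) (hN : 0 < N) (F : Polynomial ℝ) :
    astar b N r F =
      ∑ k ∈ Finset.range N, C (alphaC b N r k * F.coeff k) * X ^ ((k + r) % N) := by
  classical
  set g : Polynomial ℝ := X ^ N - 1 with hg
  have hg1 : g = X ^ N - C 1 := by rw [hg, map_one]
  have hmonic : g.Monic := by rw [hg1]; exact monic_X_pow_sub_C 1 hN.ne'
  have hdeg : g.degree = (N : ℕ) := by rw [hg1]; exact degree_X_pow_sub_C hN 1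
  set Q : Polynomial ℝ :=
    ∑ k ∈ Finset.range N, C (alphaC b N r k * F.coeff k) * X ^ ((k + r) % N) with hQ
  set P : Polynomial ℝ :=
    ∑ k ∈ Finset.range N, C (alphaC b N r k * F.coeff k) * X ^ (k + r) with hP
  have hdegQ : Q.degree < g.degree := by
    rw [hdeg, hQ]
    apply lt_of_le_of_lt (Polynomial.degree_sum_le _ _)
    apply Finset.sup_lt_iff (by exact_mod_cast WithBot.bot_lt_coe N) |>.mpr
    intro k hk
    apply lt_of_le_of_lt (degree_C_mul_X_pow_le _ _)
    exact_mod_cast Nat.mod_lt _ hN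
  have hdvd : g ∣ P - Q := by
    rw [hP, hQ, ← Finset.sum_sub_distrib]
    apply Finset.dvd_sum
    intro k _
    have hsplit : (X : Polynomial ℝ) ^ (k + r) - X ^ ((k + r) % N) =
        X ^ ((k + r) % N) * (((X : Polynomial ℝ) ^ N) ^ ((k + r) / N) - 1 ^ ((k + r) / N)) := by
      rw [mul_sub, one_pow, mul_one, ← pow_mul, ← pow_add]
      rw [Nat.mod_add_div]
    have : g ∣ (X : Polynomial ℝ) ^ (k + r) - X ^ ((k + r) % N) := by
      rw [hsplit]
      exact Dvd.dvd.mul_left (sub_dvd_pow_sub_pow _ _ _) _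
    calc g ∣ (X : Polynomial ℝ) ^ (k + r) - X ^ ((k + r) % N) := this
      _ ∣ C (alphaC b N r k * F.coeff k) * X ^ (k + r) -
          C (alphaC b N r k * F.coeff k) * X ^ ((k + r) % N) := by
          rw [← mul_sub]; exact Dvd.intro_left _ rfl
  have h1 : (P - Q) %ₘ g = 0 := (modByMonic_eq_zero_iff_dvd hmonic).mpr hdvd
  have h2 : Q %ₘ g = Q := (modByMonic_eq_self_iff hmonic).mpr hdegQ
  have h3 : P %ₘ g - Q %ₘ g = 0 := by rw [← sub_modByMonic, h1]
  rw [astar]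
  rw [h2] at h3
  have : P %ₘ g = Q := by linear_combination (norm := ring_nf) h3
  exact this

/-- Coefficientwise bound on `astar`. -/
lemma abs_astar_coeff_le (b N : ℕ) (hb : 4 ≤ b) (hN : 3 ≤ N) (F : Polynomial ℝ)
    (r i : ℕ) :
    |(astar b N r F).coeff i| ≤
      ((Finset.range N).sup' (Finset.nonempty_range_iff.mpr (by omega))
        (fun k => |F.coeff k|)) * ((2:ℝ) ^ (-((b:ℤ) - 2))) ^ r := by
  classical
  set M : ℝ := (Finset.range N).sup' (Finset.nonempty_range_iff.mpr (by omega))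
      (fun k => |F.coeff k|) with hM
  have hM0 : 0 ≤ M := by
    rw [hM]
    exact le_trans (abs_nonneg (F.coeff 0))
      (Finset.le_sup' (fun k => |F.coeff k|) (Finset.mem_range.mpr (show 0 < N by omega)))
  have hq0 : (0:ℝ) ≤ ((2:ℝ) ^ (-((b:ℤ) - 2))) ^ r := by positivity
  rw [astar_eq b N r (by omega) F, finset_sum_coeff]
  simp only [coeff_C_mul, coeff_X_pow, mul_ite, mul_one, mul_zero]
  rw [← Finset.sum_filter]
  set S := (Finset.range N).filter (fun k => i = (k + r) % N) with hS
  have hcard : S.card ≤ 1 := by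
    apply Finset.card_le_one.mpr
    intro a ha b' hb'
    rw [hS, Finset.mem_filter, Finset.mem_range] at ha hb'
    have h1 : (a + r) % N = (b' + r) % N := ha.2.symm.trans hb'.2
    have h2 : a % N = b' % N := Nat.ModEq.add_right_cancel' r h1
    rwa [Nat.mod_eq_of_lt ha.1, Nat.mod_eq_of_lt hb'.1] at h2
  rcases Finset.card_le_one_iff_subset_singleton.mp hcard with ⟨a, ha⟩
  rcases Finset.subset_singleton_iff.mp ha with h | h
  · rw [h, Finset.sum_empty, abs_zero]
    positivity
  · rw [h, Finset.sum_singleton, abs_mul]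
    have haN : a ∈ Finset.range N := by
      have : a ∈ S := by rw [h]; exact Finset.mem_singleton_self a
      rw [hS, Finset.mem_filter] at this
      exact this.1
    have h1 : |alphaC b N r a| ≤ ((2:ℝ) ^ (-((b:ℤ) - 2))) ^ r :=
      abs_alphaC_le b N r a hb hN (Finset.mem_range.mp haN)
    have h2 : |F.coeff a| ≤ M := by
      rw [hM]; exact Finset.le_sup' (fun k => |F.coeff k|) haN
    calc |alphaC b N r a| * |F.coeff a|
        ≤ ((2:ℝ) ^ (-((b:ℤ) - 2))) ^ r * M :=
          mul_le_mul h1 h2 (abs_nonneg _) hq0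
      _ = M * ((2:ℝ) ^ (-((b:ℤ) - 2))) ^ r := mul_comm _ _

set_option maxHeartbeats 1000000 in
/-- the coefficientwise series `∑_r (α*_r F)_i` converges absolutely,
the tail from `r = λ` onwards is bounded by `(4/3) 2^(-λ(b-2)) max_k |F_k|`, and the
partial sum over `r < λ` is bounded by `(4/3) max_k |F_k|`. -/
theorem astar_series_bounds (b N : ℕ) (hb : 4 ≤ b) (hN : 3 ≤ N)
    (F : Polynomial ℝ) (hF : F.natDegree < N) (lam : ℕ) (i : ℕ) (hi : i < N) :
    Summable (fun r : ℕ => |(astar b N r F).coeff i|) ∧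
    |∑' r : ℕ, (astar b N (lam + r) F).coeff i| ≤
      4 / 3 * (2:ℝ) ^ (-((lam : ℤ) * ((b : ℤ) - 2))) *
        (Finset.range N).sup' (Finset.nonempty_range_iff.mpr (by omega))
          (fun k => |F.coeff k|) ∧
    |∑ r ∈ Finset.range lam, (astar b N r F).coeff i| ≤
      4 / 3 *
        (Finset.range N).sup' (Finset.nonempty_range_iff.mpr (by omega))
          (fun k => |F.coeff k|) := by
  have hN0 : 0 < N := by omega
  set M : ℝ := (Finset.range N).sup' (Finset.nonempty_range_iff.mpr (by omega))
      (fun k => |F.coeff k|) with hM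
  have hM0 : 0 ≤ M := by
    rw [hM]
    exact le_trans (abs_nonneg (F.coeff 0))
      (Finset.le_sup' (fun k => |F.coeff k|) (Finset.mem_range.mpr hN0))
  set q : ℝ := (2:ℝ) ^ (-((b:ℤ) - 2)) with hq
  have hq0 : (0:ℝ) ≤ q := by rw [hq]; positivity
  have hq14 : q ≤ 1/4 := by
    rw [hq]
    calc (2:ℝ) ^ (-((b:ℤ) - 2)) ≤ (2:ℝ) ^ (-2 : ℤ) :=
          zpow_le_zpow_right₀ one_le_two (by omega)
      _ = 1/4 := by norm_num
  have hq1 : q < 1 := lt_of_le_of_lt hq14 (by norm_num)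
  have hinv : (1 - q)⁻¹ ≤ 4/3 := by
    rw [inv_le_comm₀ (by linarith) (by norm_num)]
    norm_num
    linarith
  have hbound : ∀ r : ℕ, |(astar b N r F).coeff i| ≤ M * q ^ r := fun r =>
    abs_astar_coeff_le b N hb hN F r i
  have hgeomsum : Summable (fun r : ℕ => q ^ r) := summable_geometric_of_lt_one hq0 hq1
  have hsum : Summable (fun r : ℕ => |(astar b N r F).coeff i|) :=
    Summable.of_nonneg_of_le (fun r => abs_nonneg _) hbound (hgeomsum.mul_left M)
  refine ⟨hsum, ?_, ?_⟩
  · -- tail bound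
    have habs : Summable (fun r : ℕ => |(astar b N (lam + r) F).coeff i|) :=
      hsum.comp_injective (add_right_injective lam)
    have h1 : |∑' r : ℕ, (astar b N (lam + r) F).coeff i| ≤
        ∑' r : ℕ, |(astar b N (lam + r) F).coeff i| := by
      have := norm_tsum_le_tsum_norm (f := fun r : ℕ => (astar b N (lam + r) F).coeff i)
        (by simpa [Real.norm_eq_abs] using habs)
      simpa [Real.norm_eq_abs] using this
    have h2 : ∑' r : ℕ, |(astar b N (lam + r) F).coeff i| ≤
        ∑' r : ℕ, (M * q ^ lam) * q ^ r := by
      apply Summable.tsum_le_tsum _ habs (hgeomsum.mul_left _)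
      intro r
      calc |(astar b N (lam + r) F).coeff i| ≤ M * q ^ (lam + r) := hbound _
        _ = (M * q ^ lam) * q ^ r := by rw [pow_add]; ring
    have h3 : ∑' r : ℕ, (M * q ^ lam) * q ^ r = (M * q ^ lam) * (1 - q)⁻¹ := by
      rw [tsum_mul_left, tsum_geometric_of_lt_one hq0 hq1]
    have hqlam : q ^ lam = (2:ℝ) ^ (-((lam : ℤ) * ((b:ℤ) - 2))) := by
      rw [hq, ← zpow_natCast ((2:ℝ) ^ (-((b:ℤ) - 2))) lam, ← zpow_mul]
      congr 1; ring
    calc |∑' r : ℕ, (astar b N (lam + r) F).coeff i|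
        ≤ (M * q ^ lam) * (1 - q)⁻¹ := h1.trans (h2.trans_eq h3)
      _ ≤ (M * q ^ lam) * (4/3) :=
          mul_le_mul_of_nonneg_left hinv (by positivity)
      _ = 4 / 3 * (2:ℝ) ^ (-((lam : ℤ) * ((b:ℤ) - 2))) * M := by rw [hqlam]; ring
  · -- partial sum bound
    calc |∑ r ∈ Finset.range lam, (astar b N r F).coeff i|
        ≤ ∑ r ∈ Finset.range lam, |(astar b N r F).coeff i| :=
          Finset.abs_sum_le_sum_abs _ _
      _ ≤ ∑ r ∈ Finset.range lam, M * q ^ r := Finset.sum_le_sum fun r _ => hbound r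
      _ = M * ∑ r ∈ Finset.range lam, q ^ r := by rw [Finset.mul_sum]
      _ ≤ M * (1 - q)⁻¹ := by
          apply mul_le_mul_of_nonneg_left _ hM0
          calc ∑ r ∈ Finset.range lam, q ^ r ≤ ∑' r : ℕ, q ^ r :=
                Summable.sum_le_tsum _ (fun r _ => by positivity) hgeomsum
            _ = (1 - q)⁻¹ := tsum_geometric_of_lt_one hq0 hq1
      _ ≤ 4 / 3 * M := by nlinarith
end

section
/- Let F be a real polynomial of degree less than N with coefficients F_0, …, F_{N−1}, for r ≥ 0 let α*_r F denote the remainder on dividing ∑_{k=0}^{N−1} α_{r,k}·F_k·X^{k+r} by X^N − 1, and let z ∈ ℂ satisfy z^N = 1. Then the series ∑_{r=0}^∞ (α*_r F)(z) converges and equals F(α(z)) = ∑_{k=0}^{N−1} F_k·α(z)^k, where α(z) := ∑_{r=0}^∞ α_{r,1} z^{r+1}. -/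
open Polynomial

open Finset

/-- The function `α(z) = ∑ α_{r,1} z^(r+1)`. -/
noncomputable def alphaF (b N : ℕ) (z : ℂ) : ℂ :=
  ∑' r : ℕ, (alphaC b N r 1 : ℂ) * z ^ (r + 1)

noncomputable def rkP (r : ℕ) (u : ℝ) : Polynomial ℝ :=
  if r = 0 then 1
  else C ((r.factorial : ℝ))⁻¹ *
    (X * ∏ j ∈ Finset.range (r - 1), (X + C ((r : ℝ) * u - ((j : ℝ) + 1))))
lemma rkP_zero (u : ℝ) : rkP 0 u = 1 := rfl
lemma rkP_eval_succ (m : ℕ) (u x : ℝ) :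
    (rkP (m+1) u).eval x
      = (((m+1).factorial : ℝ))⁻¹ *
        (x * ∏ j ∈ Finset.range m, (x + ((m:ℝ)+1) * u - ((j:ℝ)+1))) := by
  simp only [rkP, Nat.succ_ne_zero, if_false, eval_mul, eval_C, eval_X, eval_prod, eval_add,
    Nat.add_sub_cancel]
  congr 1
  congr 1
  refine Finset.prod_congr rfl (fun j _ => by push_cast; ring)
lemma rkP_step (u : ℝ) (m : ℕ) (x : ℝ) :
    (rkP (m+1) u).eval (x+1) = (rkP (m+1) u).eval x + (rkP m u).eval (x+u) := by
  cases m with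
  | zero =>
      rw [rkP_eval_succ, rkP_eval_succ, rkP_zero]
      simp [Nat.factorial]
  | succ m =>
      rw [rkP_eval_succ, rkP_eval_succ, rkP_eval_succ]
      push_cast
      have hA : ∏ j ∈ Finset.range (m+1), (x + 1 + ((m:ℝ)+1+1) * u - ((j:ℝ)+1))
          = (∏ j ∈ Finset.range m, (x + ((m:ℝ)+1+1) * u - ((j:ℝ)+1))) * (x + ((m:ℝ)+1+1)*u) := by
        rw [Finset.prod_range_succ']
        congr 1
        · exact Finset.prod_congr rfl (fun j _ => by push_cast; ring)
        · ring
      have hB : ∏ j ∈ Finset.range (m+1), (x + ((m:ℝ)+1+1) * u - ((j:ℝ)+1))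
          = (∏ j ∈ Finset.range m, (x + ((m:ℝ)+1+1) * u - ((j:ℝ)+1))) * (x + ((m:ℝ)+1+1)*u - ((m:ℝ)+1)) := by
        rw [Finset.prod_range_succ]
      have hD : ∏ j ∈ Finset.range m, (x + u + ((m:ℝ)+1) * u - ((j:ℝ)+1))
          = ∏ j ∈ Finset.range m, (x + ((m:ℝ)+1+1) * u - ((j:ℝ)+1)) :=
        Finset.prod_congr rfl (fun j _ => by ring)
      rw [hA, hB, hD]
      have hf2 : ((m+1+1).factorial : ℝ) = ((m:ℝ)+1+1) * ((m+1).factorial : ℝ) := by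
        rw [Nat.factorial_succ]; push_cast; ring
      have hf0 : ((m+1).factorial : ℝ) ≠ 0 := by positivity
      have hf0' : ((m+1+1).factorial : ℝ) ≠ 0 := by positivity
      rw [hf2]
      field_simp
      ring

lemma eval_eq_of_periodic (p : Polynomial ℝ) (h : ∀ x : ℝ, p.eval (x+1) = p.eval x) :
    ∀ x : ℝ, p.eval x = p.eval 0 := by
  have hn : ∀ (n : ℕ), (p - C (p.eval 0)).eval (n : ℝ) = 0 := by
    intro n
    induction n with
    | zero => simp
    | succ n ih =>
        have := h (n : ℝ)
        simp only [eval_sub, eval_C] at ih ⊢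
        push_cast
        rw [this]
        linarith
  have hroot : {x : ℝ | (p - C (p.eval 0)).IsRoot x}.Infinite := by
    refine (Set.infinite_range_of_injective (Nat.cast_injective (R := ℝ))).mono ?_
    rintro x ⟨n, rfl⟩
    exact hn n
  have hp0 : p - C (p.eval 0) = 0 := Polynomial.eq_zero_of_infinite_isRoot _ hroot
  intro x
  have := congrArg (Polynomial.eval x) hp0
  simpa [sub_eq_zero] using this

/-- Rothe–Hagen convolution identity. -/
lemma rkP_conv (u : ℝ) : ∀ (n : ℕ) (x y : ℝ),
    ∑ k ∈ Finset.range (n+1), (rkP k u).eval x * (rkP (n-k) u).eval y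
      = (rkP n u).eval (x+y) := by
  intro n
  induction n with
  | zero => intro x y; simp [rkP_zero]
  | succ n ih =>
      intro x y
      set q : Polynomial ℝ :=
        (∑ k ∈ Finset.range (n+2), rkP k u * C ((rkP (n+1-k) u).eval y))
          - (rkP (n+1) u).comp (X + C y) with hq
      have hqe : ∀ x : ℝ, q.eval x
          = (∑ k ∈ Finset.range (n+2), (rkP k u).eval x * (rkP (n+1-k) u).eval y)
            - (rkP (n+1) u).eval (x+y) := by
        intro x
        simp [hq, eval_finset_sum, eval_comp]
      have hper : ∀ x : ℝ, q.eval (x+1) = q.eval x := by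
        intro x
        rw [hqe, hqe]
        have hsum : ∑ k ∈ Finset.range (n+2), (rkP k u).eval (x+1) * (rkP (n+1-k) u).eval y
            = (∑ k ∈ Finset.range (n+2), (rkP k u).eval x * (rkP (n+1-k) u).eval y)
              + ∑ i ∈ Finset.range (n+1), (rkP i u).eval (x+u) * (rkP (n-i) u).eval y := by
          rw [Finset.sum_range_succ' (fun k => (rkP k u).eval (x+1) * (rkP (n+1-k) u).eval y),
              Finset.sum_range_succ' (fun k => (rkP k u).eval x * (rkP (n+1-k) u).eval y)]
          have : ∀ i : ℕ, (rkP (i+1) u).eval (x+1) * (rkP (n+1-(i+1)) u).eval y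
              = (rkP (i+1) u).eval x * (rkP (n+1-(i+1)) u).eval y
                + (rkP i u).eval (x+u) * (rkP (n-i) u).eval y := by
            intro i
            rw [rkP_step]
            have : n + 1 - (i+1) = n - i := by omega
            rw [this]
            ring
          rw [Finset.sum_congr rfl (fun i _ => this i)]
          rw [Finset.sum_add_distrib]
          simp only [rkP_zero, eval_one]
          ring
        rw [hsum, ih (x+u) y]
        have h1 : x + 1 + y = (x + y) + 1 := by ring
        rw [h1, rkP_step u n (x+y)]
        have h2 : x + u + y = x + y + u := by ring
        rw [h2]
        ring
      have hzero : q.eval 0 = 0 := by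
        rw [hqe]
        have : ∑ k ∈ Finset.range (n+2), (rkP k u).eval 0 * (rkP (n+1-k) u).eval y
            = (rkP (n+1) u).eval y := by
          rw [Finset.sum_range_succ' (fun k => (rkP k u).eval 0 * (rkP (n+1-k) u).eval y)]
          have h1 : ∀ i ∈ Finset.range (n+1),
              (rkP (i+1) u).eval 0 * (rkP (n+1-(i+1)) u).eval y = 0 := by
            intro i _
            rw [rkP_eval_succ]
            ring
          rw [Finset.sum_congr rfl h1]
          simp [rkP_zero]
        rw [this]
        simp
      have hx := eval_eq_of_periodic q hper x
      rw [hzero] at hx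
      have := hqe x
      rw [hx] at this
      linarith [this]

lemma alphaC_eq_rkP (b N : ℕ) (hN : N ≠ 0) (r k : ℕ) :
    alphaC b N r k = (rkP r ((N:ℝ))⁻¹).eval ((k:ℝ) / N) * (-(2:ℝ) ^ (-(b:ℤ)))^r := by
  have hN0 : (N:ℝ) ≠ 0 := Nat.cast_ne_zero.mpr hN
  cases r with
  | zero => simp [alphaC, rkP_zero]
  | succ m =>
      rw [alphaC, if_neg (Nat.succ_ne_zero m), rkP_eval_succ, gbc]
      have hprod : ∏ j ∈ Finset.range m, (((k:ℝ) + (m+1)) / N - 1 - (j:ℕ))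
          = ∏ j ∈ Finset.range m, ((k:ℝ)/N + ((m:ℝ)+1) * (N:ℝ)⁻¹ - ((j:ℝ)+1)) := by
        refine Finset.prod_congr rfl (fun j _ => ?_)
        push_cast
        field_simp
        ring
      have hms : (m+1 : ℕ) - 1 = m := rfl
      rw [hms]
      push_cast
      rw [← hprod]
      have hf : ((m+1).factorial : ℝ) = ((m:ℝ)+1) * (m.factorial : ℝ) := by
        rw [Nat.factorial_succ]; push_cast; ring
      have hfm : (m.factorial : ℝ) ≠ 0 := by positivity
      rw [hf]
      field_simp

lemma alphaC_conv (b N : ℕ) (hN : N ≠ 0) (n K : ℕ) :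
    ∑ i ∈ Finset.range (n+1), alphaC b N i 1 * alphaC b N (n-i) K = alphaC b N n (K+1) := by
  have t := (-(2:ℝ) ^ (-(b:ℤ)))
  simp only [alphaC_eq_rkP b N hN]
  have hstep : ∀ i ∈ Finset.range (n+1),
      (rkP i ((N:ℝ))⁻¹).eval ((1:ℕ) / (N:ℝ)) * (-(2:ℝ) ^ (-(b:ℤ)))^i
        * ((rkP (n-i) ((N:ℝ))⁻¹).eval ((K:ℝ) / N) * (-(2:ℝ) ^ (-(b:ℤ)))^(n-i))
      = ((rkP i ((N:ℝ))⁻¹).eval ((1:ℕ) / (N:ℝ)) * (rkP (n-i) ((N:ℝ))⁻¹).eval ((K:ℝ) / N))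
        * (-(2:ℝ) ^ (-(b:ℤ)))^n := by
    intro i hi
    have hin : i ≤ n := Nat.lt_succ_iff.mp (Finset.mem_range.mp hi)
    have h3 : (-(2:ℝ) ^ (-(b:ℤ)))^i * (-(2:ℝ) ^ (-(b:ℤ)))^(n-i) = (-(2:ℝ) ^ (-(b:ℤ)))^n := by
      rw [← pow_add]
      congr 1
      omega
    rw [← h3]
    ring
  rw [Finset.sum_congr rfl hstep, ← Finset.sum_mul]
  rw [rkP_conv ((N:ℝ))⁻¹ n ((1:ℕ) / (N:ℝ)) ((K:ℝ)/N)]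
  have : ((1:ℕ):ℝ) / (N:ℝ) + (K:ℝ)/N = ((K:ℝ)+1)/N := by
    push_cast
    ring
  rw [this]
  push_cast
  ring


lemma prod_max_le (c : ℝ) (hc : 0 ≤ c) :
    ∀ m : ℕ, ∏ j ∈ Finset.range m, max ((j:ℝ)+1) c ≤ (m.factorial : ℝ) * Real.exp c := by
  intro m
  induction m with
  | zero => simpa using Real.one_le_exp hc
  | succ m ih =>
      rcases le_or_gt c ((m:ℝ)+1) with h | h
      · rw [Finset.prod_range_succ, max_eq_left h]
        calc (∏ j ∈ Finset.range m, max ((j:ℝ)+1) c) * ((m:ℝ)+1)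
            ≤ ((m.factorial : ℝ) * Real.exp c) * ((m:ℝ)+1) := by
              apply mul_le_mul_of_nonneg_right ih (by positivity)
          _ = ((m+1).factorial : ℝ) * Real.exp c := by
              rw [Nat.factorial_succ]; push_cast; ring
      · have hall : ∀ j ∈ Finset.range (m+1), max ((j:ℝ)+1) c = c := by
          intro j hj
          have : (j:ℝ) + 1 ≤ (m:ℝ) + 1 := by
            have := Nat.lt_succ_iff.mp (Finset.mem_range.mp hj)
            exact_mod_cast Nat.succ_le_succ this
          exact max_eq_right (le_of_lt (lt_of_le_of_lt this h))
        rw [Finset.prod_congr rfl hall, Finset.prod_const]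
        have := Real.pow_div_factorial_le_exp _ hc (m+1)
        rw [div_le_iff₀ (by positivity)] at this
        calc c ^ (Finset.range (m+1)).card = c ^ (m+1) := by rw [Finset.card_range]
          _ ≤ Real.exp c * (((m+1).factorial : ℕ) : ℝ) := this
          _ = ((m+1).factorial : ℝ) * Real.exp c := by ring

lemma gbc_bound (x : ℝ) (m : ℕ) (hx : -1 ≤ x) : |gbc x m| ≤ Real.exp (x+1) := by
  have hc : (0:ℝ) ≤ x + 1 := by linarith
  have h1 : |∏ j ∈ Finset.range m, (x - (j:ℕ))| ≤ (m.factorial : ℝ) * Real.exp (x+1) := by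
    calc |∏ j ∈ Finset.range m, (x - (j:ℕ))| = ∏ j ∈ Finset.range m, |x - (j:ℕ)| :=
          Finset.abs_prod _ _
      _ ≤ ∏ j ∈ Finset.range m, max ((j:ℝ)+1) (x+1) := by
          apply Finset.prod_le_prod (fun j _ => abs_nonneg _)
          intro j _
          rw [abs_le]
          constructor
          · have : (j:ℝ) - x ≤ (j:ℝ) + 1 := by linarith
            have h2 : (j:ℝ) + 1 ≤ max ((j:ℝ)+1) (x+1) := le_max_left _ _
            push_cast
            linarith
          · have : x - (j:ℝ) ≤ x + 1 := by
              have h0 : (0:ℝ) ≤ (j:ℝ) := Nat.cast_nonneg j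
              linarith
            have h2 : x + 1 ≤ max ((j:ℝ)+1) (x+1) := le_max_right _ _
            push_cast
            linarith
      _ ≤ (m.factorial : ℝ) * Real.exp (x+1) := prod_max_le (x+1) hc m
  rw [gbc, abs_div]
  rw [abs_of_pos (by positivity : (0:ℝ) < (m.factorial : ℝ))]
  rw [div_le_iff₀ (by positivity)]
  calc |∏ j ∈ Finset.range m, (x - (j:ℕ))| ≤ (m.factorial : ℝ) * Real.exp (x+1) := h1
    _ = Real.exp (x+1) * (m.factorial : ℝ) := by ring

lemma alphaC_le (b N : ℕ) (hb : 4 ≤ b) (hN : 3 ≤ N) (k r : ℕ) :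
    |alphaC b N r k| ≤ ((k:ℝ)+1) * Real.exp k *
      (Real.exp 3⁻¹ * (2:ℝ)^(-(b:ℤ)))^r := by
  have hek : (1:ℝ) ≤ Real.exp k := Real.one_le_exp (by positivity)
  have h0k : (0:ℝ) ≤ (k:ℝ) := Nat.cast_nonneg k
  cases r with
  | zero =>
      have : alphaC b N 0 k = 1 := by simp [alphaC]
      rw [this, pow_zero, mul_one, abs_one]
      nlinarith
  | succ m =>
      have hNpos : (0:ℝ) < (N:ℝ) := by
        have : 0 < N := by omega
        exact_mod_cast this
      have hrpos : (0:ℝ) < ((m+1:ℕ):ℝ) := by positivity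
      set x : ℝ := ((k:ℝ) + ((m+1:ℕ):ℝ)) / N - 1 with hxdef
      have hxnn : (0:ℝ) ≤ ((k:ℝ) + ((m+1:ℕ):ℝ)) / N := by positivity
      have hx : -1 ≤ x := by rw [hxdef]; linarith
      have hzp : (0:ℝ) < (2:ℝ)^(-(b:ℤ)) := by positivity
      have habs : |alphaC b N (m+1) k|
          = (k:ℝ)/(((m+1:ℕ):ℝ)*N) * |gbc x m| * ((2:ℝ)^(-(b:ℤ)))^(m+1) := by
        rw [alphaC, if_neg (Nat.succ_ne_zero m)]
        simp only [Nat.add_sub_cancel]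
        rw [abs_mul, abs_mul, abs_pow, abs_neg, abs_of_pos hzp,
          abs_of_nonneg (by positivity : (0:ℝ) ≤ (k:ℝ)/(((m+1:ℕ):ℝ)*N))]
      rw [habs]
      have hb1 : (k:ℝ)/(((m+1:ℕ):ℝ)*N) ≤ (k:ℝ)+1 := by
        have h1 : (1:ℝ) ≤ ((m+1:ℕ):ℝ)*N := by
          have : 1 ≤ (m+1)*N := Nat.one_le_iff_ne_zero.mpr (by positivity)
          exact_mod_cast this
        calc (k:ℝ)/(((m+1:ℕ):ℝ)*N) ≤ (k:ℝ) := div_le_self h0k h1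
          _ ≤ (k:ℝ)+1 := by linarith
      have hb2 : |gbc x m| ≤ Real.exp (k:ℝ) * Real.exp 3⁻¹ ^ (m+1) := by
        calc |gbc x m| ≤ Real.exp (x+1) := gbc_bound x m hx
          _ ≤ Real.exp ((k:ℝ) + ((m+1:ℕ):ℝ) * 3⁻¹) := by
              rw [Real.exp_le_exp, hxdef]
              have h3 : ((k:ℝ) + ((m+1:ℕ):ℝ)) / N ≤ ((k:ℝ) + ((m+1:ℕ):ℝ)) / 3 := by
                apply div_le_div_of_nonneg_left (by positivity) (by norm_num)
                exact_mod_cast hN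
              have h4 : ((k:ℝ) + ((m+1:ℕ):ℝ)) / 3 ≤ (k:ℝ) + ((m+1:ℕ):ℝ) * 3⁻¹ := by
                rw [div_eq_mul_inv, add_mul]
                have : (k:ℝ) * 3⁻¹ ≤ (k:ℝ) := by
                  rw [mul_inv_le_iff₀ (by norm_num : (0:ℝ) < 3)]
                  nlinarith
                linarith
              linarith
          _ = Real.exp (k:ℝ) * Real.exp 3⁻¹ ^ (m+1) := by
              rw [Real.exp_add, Real.exp_nat_mul]
      calc (k:ℝ)/(((m+1:ℕ):ℝ)*N) * |gbc x m| * ((2:ℝ)^(-(b:ℤ)))^(m+1)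
          ≤ ((k:ℝ)+1) * (Real.exp (k:ℝ) * Real.exp 3⁻¹ ^ (m+1)) * ((2:ℝ)^(-(b:ℤ)))^(m+1) := by
            have hgnn : (0:ℝ) ≤ |gbc x m| := abs_nonneg _
            have hknn : (0:ℝ) ≤ (k:ℝ)/(((m+1:ℕ):ℝ)*N) := by positivity
            apply mul_le_mul_of_nonneg_right _ (by positivity)
            apply mul_le_mul hb1 hb2 hgnn (by linarith)
          _ = ((k:ℝ)+1) * Real.exp (k:ℝ) * (Real.exp 3⁻¹ * (2:ℝ)^(-(b:ℤ)))^(m+1) := by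
            rw [mul_pow]; ring

lemma rho_lt_one (b : ℕ) (hb : 4 ≤ b) :
    Real.exp 3⁻¹ * (2:ℝ)^(-(b:ℤ)) < 1 := by
  have h1 : Real.exp 3⁻¹ ≤ Real.exp 1 := by rw [Real.exp_le_exp]; norm_num
  have h2 : Real.exp 1 < 2.7182818286 := Real.exp_one_lt_d9
  have h3 : (2:ℝ)^(-(b:ℤ)) ≤ (2:ℝ)^(-(4:ℤ)) := by
    apply zpow_le_zpow_right₀ (by norm_num : (1:ℝ) ≤ 2)
    omega
  have h4 : (2:ℝ)^(-(4:ℤ)) = 1/16 := by norm_num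
  have h5 : (0:ℝ) < (2:ℝ)^(-(b:ℤ)) := by positivity
  have h6 : Real.exp 3⁻¹ * (2:ℝ)^(-(b:ℤ)) ≤ Real.exp 3⁻¹ * (2:ℝ)^(-(4:ℤ)) :=
    mul_le_mul_of_nonneg_left h3 (le_of_lt (Real.exp_pos _))
  rw [h4] at h6
  linarith

lemma summable_abs_alphaC (b N : ℕ) (hb : 4 ≤ b) (hN : 3 ≤ N) (k : ℕ) :
    Summable (fun r => |alphaC b N r k|) := by
  have h0 : (0:ℝ) ≤ Real.exp 3⁻¹ * (2:ℝ)^(-(b:ℤ)) := by positivity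
  apply Summable.of_nonneg_of_le (fun r => abs_nonneg _) (alphaC_le b N hb hN k)
  exact (summable_geometric_of_lt_one h0 (rho_lt_one b hb)).mul_left _

lemma summable_norm_term (b N : ℕ) (hb : 4 ≤ b) (hN : 3 ≤ N) (z : ℂ) (hz1 : ‖z‖ = 1) (k : ℕ) :
    Summable (fun r : ℕ => ‖((alphaC b N r k : ℝ):ℂ) * z^(k+r)‖) := by
  apply (summable_abs_alphaC b N hb hN k).congr
  intro r
  rw [norm_mul, norm_pow, hz1, one_pow, mul_one, Complex.norm_real, Real.norm_eq_abs]

lemma hasSum_alpha_pow (b N : ℕ) (hb : 4 ≤ b) (hN : 3 ≤ N) (z : ℂ) (hz1 : ‖z‖ = 1) :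
    ∀ K : ℕ, HasSum (fun r : ℕ => ((alphaC b N r K : ℝ):ℂ) * z^(K+r)) ((alphaF b N z)^K) := by
  intro K
  induction K with
  | zero =>
      have h : ∀ r : ℕ, r ≠ 0 → ((alphaC b N r 0 : ℝ):ℂ) * z^(0+r) = 0 := by
        intro r hr
        have h1 : alphaC b N r 0 = 0 := by
          rw [alphaC, if_neg hr]
          norm_num
        rw [h1]
        norm_num
      have h0 := hasSum_single (f := fun r : ℕ => ((alphaC b N r 0 : ℝ):ℂ) * z^(0+r)) 0 h
      have h2 : ((alphaC b N 0 0 : ℝ):ℂ) * z^(0+0) = 1 := by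
        simp [alphaC]
      have h0' : HasSum (fun r : ℕ => ((alphaC b N r 0 : ℝ):ℂ) * z^(0+r))
          (((alphaC b N 0 0 : ℝ):ℂ) * z^(0+0)) := h0
      rw [h2] at h0'
      rw [pow_zero]
      exact h0'
  | succ K ih =>
      have hf := summable_norm_term b N hb hN z hz1 1
      have hg := summable_norm_term b N hb hN z hz1 K
      have hc := hasSum_sum_range_mul_of_summable_norm hf hg
      have htf : (∑' r : ℕ, ((alphaC b N r 1 : ℝ):ℂ) * z^(1+r)) = alphaF b N z := by
        rw [alphaF]
        apply tsum_congr
        intro r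
        rw [add_comm 1 r]
      have htg : (∑' r : ℕ, ((alphaC b N r K : ℝ):ℂ) * z^(K+r)) = (alphaF b N z)^K := ih.tsum_eq
      rw [htf, htg] at hc
      have hfun : (fun n : ℕ => ∑ k ∈ Finset.range (n+1),
          (((alphaC b N k 1 : ℝ):ℂ) * z^(1+k)) * (((alphaC b N (n-k) K : ℝ):ℂ) * z^(K+(n-k))))
          = fun n : ℕ => ((alphaC b N n (K+1) : ℝ):ℂ) * z^((K+1)+n) := by
        funext n
        have hterm : ∀ k ∈ Finset.range (n+1),
            (((alphaC b N k 1 : ℝ):ℂ) * z^(1+k)) * (((alphaC b N (n-k) K : ℝ):ℂ) * z^(K+(n-k)))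
            = ((alphaC b N k 1 * alphaC b N (n-k) K : ℝ):ℂ) * z^((K+1)+n) := by
          intro k hk
          have hkn : k ≤ n := Nat.lt_succ_iff.mp (Finset.mem_range.mp hk)
          have hpow : z^(1+k) * z^(K+(n-k)) = z^((K+1)+n) := by
            rw [← pow_add]
            congr 1
            omega
          push_cast
          rw [← hpow]
          ring
        rw [Finset.sum_congr rfl hterm, ← Finset.sum_mul]
        congr 1
        have := alphaC_conv b N (by omega : N ≠ 0) n K
        exact_mod_cast congrArg (fun t : ℝ => (t:ℂ)) this
      rw [hfun] at hc
      rw [pow_succ]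
      have : alphaF b N z * alphaF b N z ^ K = alphaF b N z ^ K * alphaF b N z := by ring
      rw [← this]
      exact hc

/-- if `z^N = 1`, then `∑_r (α*_r F)(z)` converges to
`F(α(z)) = ∑_{k<N} F_k α(z)^k`. -/
theorem astar_evaluation (b N : ℕ) (hb : 4 ≤ b) (hN : 3 ≤ N)
    (F : Polynomial ℝ) (hF : F.natDegree < N) (z : ℂ) (hz : z ^ N = 1) :
    HasSum (fun r : ℕ => Polynomial.aeval z (astar b N r F))
      (∑ k ∈ Finset.range N, (F.coeff k : ℂ) * (alphaF b N z) ^ k) := by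
  have hN0 : N ≠ 0 := by omega
  have hz1 : ‖z‖ = 1 := Complex.norm_eq_one_of_pow_eq_one hz hN0
  have heval : (fun r : ℕ => (Polynomial.aeval z) (astar b N r F))
      = fun r : ℕ => ∑ k ∈ Finset.range N,
          (F.coeff k : ℂ) * (((alphaC b N r k : ℝ):ℂ) * z^(k+r)) := by
    funext r
    rw [astar]
    have hm : ((X:Polynomial ℝ)^N - 1).Monic := by
      have h1 : ((X:Polynomial ℝ)^N - C 1).Monic := monic_X_pow_sub_C (1:ℝ) hN0
      simpa using h1
    rw [Polynomial.modByMonic_eq_sub_mul_div _ (X ^ N - 1), map_sub, map_mul]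
    have hzero : (Polynomial.aeval z) ((X:Polynomial ℝ)^N - 1) = 0 := by
      rw [map_sub, map_pow, Polynomial.aeval_X, map_one, hz, sub_self]
    rw [hzero, zero_mul, sub_zero, map_sum]
    refine Finset.sum_congr rfl fun k _ => ?_
    rw [map_mul, Polynomial.aeval_C, map_pow, Polynomial.aeval_X]
    have : (algebraMap ℝ ℂ) (alphaC b N r k * F.coeff k)
        = ((alphaC b N r k * F.coeff k : ℝ) : ℂ) := rfl
    rw [this]
    push_cast
    ring
  rw [heval]
  exact hasSum_sum (fun k _ => ((hasSum_alpha_pow b N hb hN z hz1 k).mul_left _))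
end
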